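/- In a closed symmetric monoidal category, let X be a dualizable object such that the unit map 1 → [X, X] (adjoint to the left unitor) is an isomorphism. Then the evaluation map X ⊗ [X, 1] → 1 is an isomorphism. -/

import Mathlib

open CategoryTheory CategoryTheory.MonoidalCategory CategoryTheory.MonoidalClosed

/-- The unit map `1 ⟶ [X, X]`, adjoint to the unitor `X ⊗ 1 ≅ X`. -/
noncomputable def unitIhom {C : Type*} [Category C] [MonoidalCategory C]
    [SymmetricCategory C] [MonoidalClosed C] (X : C) :
    𝟙_ C ⟶ (ihom X).obj X :=
  MonoidalClosed.curry (ρ_ X).hom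

/-- In a closed symmetric monoidal category, if `X` is dualizable and the
unit map `1 ⟶ [X, X]` is an isomorphism, then the evaluation `X ⊗ [X, 1] ⟶ 1` is an
isomorphism. -/
theorem dualizable_unit_iso_implies_ev_iso {C : Type*} [Category C] [MonoidalCategory C]
    [SymmetricCategory C] [MonoidalClosed C] (X Y : C) [ExactPairing X Y]
    (hunit : IsIso (unitIhom X)) :
    IsIso ((ihom.ev X).app (𝟙_ C)) := by
  haveI : ExactPairing Y X := BraidedCategory.exactPairing_swap X Y
  let adj2 : tensorLeft X ⊣ tensorLeft Y := tensorLeftAdjunction Y X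
  let i : ihom X ≅ tensorLeft Y := (ihom.adjunction X).rightAdjointUniq adj2
  -- an isomorphism `𝟙_ C ≅ Y ⊗ X`
  let u : 𝟙_ C ≅ Y ⊗ X := asIso (unitIhom X) ≪≫ i.app X
  -- `tensorLeft X` is an equivalence with quasi-inverse `tensorLeft Y`
  let eqv : C ≌ C := CategoryTheory.Equivalence.mk (tensorLeft X) (tensorLeft Y)
    (NatIso.ofComponents
      (fun A => (λ_ A).symm ≪≫ whiskerRightIso u A ≪≫ α_ Y X A)
      (by intro A B f; dsimp; simp only [MonoidalCategory.whiskerRightIso_hom]; rw [leftUnitor_inv_naturality_assoc, whisker_exchange_assoc]; simp))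
    (NatIso.ofComponents
      (fun A => (α_ X Y A).symm ≪≫ whiskerRightIso (β_ X Y ≪≫ u.symm) A ≪≫ λ_ A)
      (by intro A B f; dsimp; simp only [MonoidalCategory.whiskerRightIso_hom]; rw [associator_inv_naturality_right_assoc, whisker_exchange_assoc]; simp))
  haveI : (tensorLeft Y).IsEquivalence := eqv.symm.isEquivalence_functor
  haveI : (ihom X).Full := Functor.Full.of_iso i.symm
  haveI : (ihom X).Faithful := Functor.Faithful.of_iso i.symm
  have : IsIso ((ihom.adjunction X).counit.app (𝟙_ C)) := inferInstance
  simpa using this
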